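/- Let K be a field of characteristic p > 0 and L/K a Galois extension of degree p. Then L = K(a) for some a with a^p - a = b ∈ K, where b is not of the form x^p - x for any x ∈ K. -/

import Mathlib

open Finset Polynomial

/-- Artin–Schreier theorem: every Galois extension of degree `p` of a field of
characteristic `p > 0` is generated by a root of a polynomial `X^p - X - b`
with `b` not of the form `x^p - x` in the base field. -/
theorem artinSchreier_of_galois_degree_p
    (p : ℕ) (hp : p.Prime) (K L : Type) [Field K] [Field L] [Algebra K L]
    [CharP K p] [FiniteDimensional K L] [IsGalois K L]
    (hdeg : Module.finrank K L = p) :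
    ∃ (a : L) (b : K), Algebra.adjoin K {a} = ⊤ ∧
      a ^ p - a = algebraMap K L b ∧ ∀ x : K, x ^ p - x ≠ b := by
  classical
  haveI : Fact p.Prime := ⟨hp⟩
  haveI : CharP L p := charP_of_injective_algebraMap (algebraMap K L).injective p
  haveI : ExpChar L p := ExpChar.prime hp
  have hcard : Fintype.card (L ≃ₐ[K] L) = p := by
    rw [← Nat.card_eq_fintype_card, IsGalois.card_aut_eq_finrank, hdeg]
  haveI : IsCyclic (L ≃ₐ[K] L) := isCyclic_of_prime_card ((Nat.card_eq_fintype_card).trans hcard)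
  obtain ⟨σ, hσ⟩ := IsCyclic.exists_generator (α := L ≃ₐ[K] L)
  have horder : orderOf σ = p := by
    rw [orderOf_eq_card_of_forall_mem_zpowers hσ, Nat.card_eq_fintype_card, hcard]
  have hσp : σ ^ p = 1 := by rw [← horder]; exact pow_orderOf_eq_one σ
  -- trace surjectivity gives `c` of trace `1`
  obtain ⟨c, hc⟩ := Algebra.trace_surjective K L 1
  -- the sum over the Galois group is the sum over powers of σ
  have hbij : Function.Bijective (fun i : Fin p => σ ^ (i : ℕ)) := by
    rw [Fintype.bijective_iff_injective_and_card]
    constructor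
    · intro i j hij
      exact Fin.ext (pow_injOn_Iio_orderOf (by simpa [horder] using i.2)
        (by simpa [horder] using j.2) hij)
    · simp [hcard]
  have hsum : ∑ i ∈ range p, (σ ^ i) c = 1 := by
    have h1 : ∑ g : L ≃ₐ[K] L, g c = ∑ i : Fin p, (σ ^ (i : ℕ)) c :=
      (Fintype.sum_bijective _ hbij _ _ (fun i => rfl)).symm
    have h2 := trace_eq_sum_automorphisms (K := K) c
    rw [hc, map_one, h1, Fin.sum_univ_eq_sum_range (fun i => (σ ^ i) c)] at h2
    exact h2.symm
  set a : L := -∑ i ∈ range p, (i : L) * (σ ^ i) c with ha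
  have happly : ∀ i : ℕ, σ ((σ ^ i) c) = (σ ^ (i + 1)) c := by
    intro i
    rw [pow_succ']
    rfl
  -- σ a = a + 1
  have hσa : σ a = a + 1 := by
    have hE1 : ∑ i ∈ range p, ((i : L) + 1) * (σ ^ (i + 1)) c
        = ∑ i ∈ range p, (i : L) * (σ ^ i) c := by
      have := Finset.sum_range_succ' (fun i => (i : L) * (σ ^ i) c) p
      rw [Finset.sum_range_succ (fun i => (i : L) * (σ ^ i) c) p] at this
      simp only [Nat.cast_add, Nat.cast_one, Nat.cast_zero, zero_mul, add_zero,
        CharP.cast_eq_zero (R := L) p, zero_mul, add_zero] at this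
      simpa using this.symm
    have hE2 : ∑ i ∈ range p, (σ ^ (i + 1)) c = ∑ i ∈ range p, (σ ^ i) c := by
      have := Finset.sum_range_succ' (fun i => (σ ^ i) c) p
      rw [Finset.sum_range_succ (fun i => (σ ^ i) c) p, hσp] at this
      simpa using this.symm
    have hmain : ∑ i ∈ range p, (i : L) * (σ ^ (i + 1)) c
        = ∑ i ∈ range p, (i : L) * (σ ^ i) c - 1 := by
      have : ∀ i ∈ range p, (i : L) * (σ ^ (i + 1)) c
          = ((i : L) + 1) * (σ ^ (i + 1)) c - (σ ^ (i + 1)) c := by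
        intro i _; ring
      rw [Finset.sum_congr rfl this, Finset.sum_sub_distrib, hE1, hE2, hsum]
    rw [ha, map_neg, map_sum]
    simp only [map_mul, map_natCast, happly]
    rw [hmain]
    ring
  -- a is not in the image of K
  clear_value a
  have haK : a ∉ Set.range (algebraMap K L) := by
    rintro ⟨x, hx⟩
    have : σ a = a := by rw [← hx]; exact σ.commutes x
    rw [hσa] at this
    exact one_ne_zero (by linear_combination this)
  -- K(a) = L
  have hFtop : IntermediateField.adjoin K {a} = ⊤ := by
    set F := IntermediateField.adjoin K {a} with hF
    have hne : F ≠ ⊥ := by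
      intro h
      exact haK (IntermediateField.mem_bot.mp
        (h ▸ IntermediateField.mem_adjoin_simple_self K a))
    have hdvd : Module.finrank K F ∣ p := by
      rw [← hdeg, ← Module.finrank_mul_finrank K F L]
      exact dvd_mul_right _ _
    have h1 : Module.finrank K F ≠ 1 := fun h =>
      hne (IntermediateField.finrank_eq_one_iff.mp h)
    have hFp : Module.finrank K F = p :=
      ((hp.eq_one_or_self_of_dvd _ hdvd).resolve_left h1)
    exact IntermediateField.eq_of_le_of_finrank_eq le_top
      (by rw [hFp, IntermediateField.finrank_top', hdeg])
  have hadj : Algebra.adjoin K {a} = ⊤ := by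
    have := IntermediateField.adjoin_simple_toSubalgebra_of_isAlgebraic
      (IsIntegral.of_finite K a).isAlgebraic
    rw [hFtop] at this
    rw [← this, IntermediateField.top_toSubalgebra]
  -- a^p - a is Galois-invariant
  have hfix : ∀ g : L ≃ₐ[K] L, g (a ^ p - a) = a ^ p - a := by
    have hσfix : σ (a ^ p - a) = a ^ p - a := by
      rw [map_sub, map_pow, hσa, add_pow_char, one_pow]
      ring
    have hn : ∀ n : ℕ, (σ ^ n) (a ^ p - a) = a ^ p - a := by
      intro n
      induction n with
      | zero => rfl
      | succ n ih =>
        rw [pow_succ']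
        show σ ((σ ^ n) _) = _
        rw [ih, hσfix]
    intro g
    obtain ⟨n, hng⟩ := mem_powers_iff_mem_zpowers.mpr (hσ g)
    rw [← hng]; exact hn n
  obtain ⟨b, hb⟩ : a ^ p - a ∈ Set.range (algebraMap K L) := by
    have hmem : a ^ p - a ∈ IntermediateField.fixedField
        (⊤ : Subgroup (L ≃ₐ[K] L)) := fun g => hfix g
    rw [← IntermediateField.fixingSubgroup_bot (F := K) (E := L),
      IsGalois.fixedField_fixingSubgroup (⊥ : IntermediateField K L)] at hmem
    exact IntermediateField.mem_bot.mp hmem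
  refine ⟨a, b, hadj, hb.symm, ?_⟩
  -- b is not of the form x^p - x
  intro x hx
  set t : L := a - algebraMap K L x with ht
  clear_value t
  have htp : t ^ p = t := by
    have hap : a ^ p = algebraMap K L b + a := sub_eq_iff_eq_add.mp hb.symm
    rw [ht, sub_pow_char, ← map_pow, hap, ← hx, map_sub, map_pow]
    ring
  -- `t` is one of the `p` roots of `X^p - X`, all of which lie in the prime field
  set q : L[X] := X ^ p - X with hq
  have hqdeg : q.natDegree = p := by
    rw [hq, natDegree_sub_eq_left_of_natDegree_lt] <;>
      simp [natDegree_X_pow, hp.one_lt]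
  have hqne : q ≠ 0 := fun h => by
    rw [h, natDegree_zero] at hqdeg
    exact hp.ne_zero hqdeg.symm
  have hroot : ∀ y : L, y ^ p = y → y ∈ q.roots := by
    intro y hy
    rw [mem_roots hqne]
    simp [hq, IsRoot, hy]
  set e : ZMod p →+* L := ZMod.castHom (dvd_refl p) L with he
  set T : Finset L := Finset.univ.image e with hT
  have hTcard : T.card = p := by
    rw [hT, Finset.card_image_of_injective _ e.injective, Finset.card_univ,
      ZMod.card]
  have hTroots : T ⊆ q.roots.toFinset := by
    intro y hy
    rw [hT, Finset.mem_image] at hy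
    obtain ⟨n, _, rfl⟩ := hy
    rw [Multiset.mem_toFinset]
    exact hroot _ (by rw [← map_pow, ZMod.pow_card])
  have htT : t ∈ T := by
    by_contra hnot
    have hsub : insert t T ⊆ q.roots.toFinset := by
      intro y hy
      rcases Finset.mem_insert.mp hy with rfl | hy
      · exact Multiset.mem_toFinset.mpr (hroot _ htp)
      · exact hTroots hy
    have := (Finset.card_le_card hsub).trans
      ((Multiset.toFinset_card_le _).trans ((q.card_roots' ).trans_eq hqdeg))
    rw [Finset.card_insert_of_notMem hnot, hTcard] at this
    omega
  obtain ⟨n, _, hn⟩ := Finset.mem_image.mp htT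
  apply haK
  refine ⟨x + ZMod.castHom (dvd_refl p) K n, ?_⟩
  have hcomm : (algebraMap K L).comp (ZMod.castHom (dvd_refl p) K) = e :=
    RingHom.ext_zmod _ _
  rw [map_add]
  have : algebraMap K L (ZMod.castHom (dvd_refl p) K n) = e n := by
    rw [← hcomm]; rfl
  rw [this, hn, ht]
  ring
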